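/- Let G be a finite group of order ℓ with conjugacy classes C₁,…,Cₙ and irreducible complex characters χ₁,…,χₙ. Define p_{i₁,…,i_r} to be the number of tuples (r,s,g_{i₁},…,g_{i_r}) with r,s ∈ G, g_{i_t} ∈ C_{i_t}, and s⁻¹r⁻¹sr = g_{i₁}⋯g_{i_r}. Then p_{i₁,…,i_r} = ℓ·∑_{l=1}^{n} (ℓ_{i₁}χ_l(g_{i₁})/χ_l(1))·⋯·(ℓ_{i_r}χ_l(g_{i_r})/χ_l(1)) = ℓ·Tr(A_{i₁}⋯A_{i_r}), where A_j is the structure-constant matrix of the class sum Ĉⱼ. -/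

import Mathlib

open scoped Classical

open MonoidAlgebra Finset

/-- The class sum of the conjugacy class of `x` in the group algebra `ℂ[G]`. -/
noncomputable def classSum (G : Type) [Group G] [Fintype G] (x : G) : MonoidAlgebra ℂ G :=
  ∑ g : G, if IsConj x g then MonoidAlgebra.single g (1 : ℂ) else 0

variable {G : Type} [Group G] [Fintype G]

noncomputable instance : CoeFun (MonoidAlgebra ℂ G) (fun _ => G → ℂ) := ⟨fun p => p.coeff⟩

lemma classSum_apply (y g : G) : classSum G y g = if IsConj y g then 1 else 0 := by
  rw [classSum, MonoidAlgebra.coeff_sum, Finsupp.finset_sum_apply]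
  rw [Finset.sum_eq_single g]
  · split_ifs with h
    · simp [MonoidAlgebra.single_apply]
    · simp
  · intro b _ hb
    split_ifs with h
    · simp [MonoidAlgebra.single_apply, hb]
    · simp
  · simp

lemma coeff_classSum_mul (y : G) (f : MonoidAlgebra ℂ G) (c : G) :
    (classSum G y * f) c = ∑ u : G, if IsConj y u then f (u⁻¹ * c) else 0 := by
  rw [classSum, Finset.sum_mul, MonoidAlgebra.coeff_sum, Finsupp.finset_sum_apply]
  refine Finset.sum_congr rfl fun u _ => ?_
  split_ifs with h
  · rw [MonoidAlgebra.single_mul_apply, one_mul]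
  · simp

/-- centrality -/
def Central (z : MonoidAlgebra ℂ G) : Prop :=
  ∀ h : G, MonoidAlgebra.single h (1:ℂ) * z = z * MonoidAlgebra.single h 1

lemma central_classSum (y : G) : Central (classSum G y) := by
  intro h
  ext g
  rw [MonoidAlgebra.single_mul_apply, MonoidAlgebra.mul_single_apply, one_mul, mul_one,
    classSum_apply, classSum_apply]
  congr 1
  have : IsConj (h⁻¹ * g) (g * h⁻¹) := by
    refine isConj_iff.mpr ⟨h, by group⟩
  exact propext ⟨fun hc => hc.trans this, fun hc => hc.trans this.symm⟩

lemma Central.mul {z w : MonoidAlgebra ℂ G} (hz : Central z) (hw : Central w) :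
    Central (z * w) := by
  intro h
  rw [← mul_assoc, hz h, mul_assoc, hw h, mul_assoc]

lemma central_one : Central (1 : MonoidAlgebra ℂ G) := fun h => by rw [mul_one, one_mul]

lemma central_list_prod (L : List (MonoidAlgebra ℂ G)) (h : ∀ z ∈ L, Central z) :
    Central L.prod := by
  induction L with
  | nil => exact central_one
  | cons a l ih =>
      rw [List.prod_cons]
      exact (h a (by simp)).mul (ih fun z hz => h z (by simp [hz]))

lemma Central.apply_isConj {z : MonoidAlgebra ℂ G} (hz : Central z) {u v : G}
    (h : IsConj u v) : z u = z v := by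
  obtain ⟨c, hc⟩ := isConj_iff.mp h
  have := congrFun (congrArg (fun p => (p : MonoidAlgebra ℂ G).coeff.toFun) (hz c)) (c * u)
  -- use apply lemmas instead
  have h1 : (MonoidAlgebra.single c (1:ℂ) * z) (c * u) = z u := by
    rw [MonoidAlgebra.single_mul_apply, one_mul, inv_mul_cancel_left]
  have h2 : (z * MonoidAlgebra.single c (1:ℂ)) (c * u) = z (c * u * c⁻¹) := by
    rw [MonoidAlgebra.mul_single_apply, mul_one]
  rw [hz c, h2] at h1
  rw [← h1, hc]

lemma classSum_mul_comm (a b : G) :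
    classSum G a * classSum G b = classSum G b * classSum G a := by
  have hb : classSum G b = ∑ g : G, if IsConj b g then MonoidAlgebra.single g (1 : ℂ) else 0 := rfl
  rw [hb, Finset.mul_sum, Finset.sum_mul]
  refine Finset.sum_congr rfl fun u _ => ?_
  split_ifs with h
  · exact (central_classSum a u).symm
  · simp

variable {G : Type} [Group G] [Fintype G]

/-- chosen conjugator: `conjRep h * rr * (conjRep h)⁻¹ = u` -/
noncomputable def conjRep {rr u : G} (h : IsConj rr u) : G := Classical.choose (isConj_iff.mp h)

lemma conjRep_spec {rr u : G} (h : IsConj rr u) : conjRep h * rr * (conjRep h)⁻¹ = u :=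
  Classical.choose_spec (isConj_iff.mp h)

lemma conjRep_congr {rr u v : G} (h1 : IsConj rr u) (h2 : IsConj rr v) (e : u = v) :
    conjRep h1 = conjRep h2 := by subst e; rfl

noncomputable def conjEquiv (rr : G) :
    G ≃ {z : G // z * rr = rr * z} × {u : G // IsConj rr u} where
  toFun s :=
    (⟨(conjRep (show IsConj rr (s * rr * s⁻¹) from isConj_iff.mpr ⟨s, rfl⟩))⁻¹ * s, by
        set h := show IsConj rr (s * rr * s⁻¹) from isConj_iff.mpr ⟨s, rfl⟩
        have hc := conjRep_spec h
        set c := conjRep h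
        have h2 : s * rr * s⁻¹ = c * rr * c⁻¹ := hc.symm
        calc c⁻¹ * s * rr = c⁻¹ * (s * rr * s⁻¹) * s := by group
        _ = c⁻¹ * (c * rr * c⁻¹) * s := by rw [h2]
        _ = rr * (c⁻¹ * s) := by group⟩,
     ⟨s * rr * s⁻¹, isConj_iff.mpr ⟨s, rfl⟩⟩)
  invFun p := conjRep p.2.2 * p.1.1
  left_inv s := by
    simp only []
    exact mul_inv_cancel_left _ _
  right_inv := by
    rintro ⟨⟨z, hz⟩, ⟨u, hu⟩⟩
    have hzrr : (conjRep hu * z) * rr * (conjRep hu * z)⁻¹ = u := by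
      have hc := conjRep_spec hu
      set c := conjRep hu
      have hz' : z * rr * z⁻¹ = rr := by
        rw [hz]; group
      calc c * z * rr * (c * z)⁻¹ = c * (z * rr * z⁻¹) * c⁻¹ := by group
      _ = c * rr * c⁻¹ := by rw [hz']
      _ = u := hc
    ext
    · show (conjRep (show IsConj rr ((conjRep hu * z) * rr * (conjRep hu * z)⁻¹) from
        isConj_iff.mpr ⟨_, rfl⟩))⁻¹ * (conjRep hu * z) = z
      rw [conjRep_congr (isConj_iff.mpr ⟨_, rfl⟩) hu hzrr]
      group
    · show (conjRep hu * z) * rr * (conjRep hu * z)⁻¹ = u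
      exact hzrr

lemma card_centralizer_mul_card_class (rr : G) :
    Fintype.card G =
      Fintype.card {z : G // z * rr = rr * z} * Fintype.card {u : G // IsConj rr u} := by
  rw [Fintype.card_congr (conjEquiv rr), Fintype.card_prod]

lemma sum_conjugates (rr : G) (F : G → ℂ) :
    ∑ s : G, F (s * rr * s⁻¹) =
      (Fintype.card {z : G // z * rr = rr * z} : ℂ) *
        ∑ u : G, if IsConj rr u then F u else 0 := by
  have h1 : ∑ s : G, F (s * rr * s⁻¹)
      = ∑ p : {z : G // z * rr = rr * z} × {u : G // IsConj rr u}, F p.2.1 := by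
    refine Fintype.sum_equiv (conjEquiv rr) _ _ fun s => ?_
    rfl
  rw [h1, Fintype.sum_prod_type]
  have h2 : ∑ _x : {z : G // z * rr = rr * z}, ∑ y : {u : G // IsConj rr u}, F y
      = (Fintype.card {z : G // z * rr = rr * z} : ℂ) *
          ∑ y : {u : G // IsConj rr u}, F y := by
    rw [Finset.sum_const, card_univ, nsmul_eq_mul]
  rw [show (∑ x : {z : G // z * rr = rr * z}, ∑ y : {u : G // IsConj rr u}, F ((x, y).2 : G))
      = ∑ _x : {z : G // z * rr = rr * z}, ∑ y : {u : G // IsConj rr u}, F y from rfl, h2]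
  congr 1
  rw [← Finset.sum_filter]
  exact (Finset.sum_subtype _ (by simp) fun u => F u).symm

lemma coeff_prod_eq : ∀ (r : ℕ) (w : Fin r → G) (c : G),
    ((List.ofFn (fun t => classSum G (w t))).prod : MonoidAlgebra ℂ G) c
      = ∑ f : Fin r → G, if (∀ t, IsConj (w t) (f t)) ∧ (List.ofFn f).prod = c then 1 else 0 := by
  intro r
  induction r with
  | zero =>
      intro w c
      rw [Fintype.sum_unique]
      simp only [List.ofFn_zero, List.prod_nil]
      rw [MonoidAlgebra.one_def, MonoidAlgebra.single_apply]
      by_cases h : (1:G) = c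
      · rw [if_pos h, if_pos ⟨fun t => t.elim0, h⟩]
      · rw [if_neg h, if_neg (fun hc => h hc.2)]
  | succ r ih =>
      intro w c
      rw [List.ofFn_succ, List.prod_cons]
      rw [coeff_classSum_mul]
      have hrw : ∀ u : G,
          ((List.ofFn fun t : Fin r => classSum G (w t.succ)).prod : MonoidAlgebra ℂ G) (u⁻¹ * c)
            = ∑ f : Fin r → G,
                if (∀ t, IsConj (w t.succ) (f t)) ∧ (List.ofFn f).prod = u⁻¹ * c then 1 else 0 :=
        fun u => ih (fun t => w t.succ) (u⁻¹ * c)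
      calc (∑ u : G, if IsConj (w 0) u then
              ((List.ofFn fun t : Fin r => classSum G (w t.succ)).prod : MonoidAlgebra ℂ G) (u⁻¹ * c) else 0)
          = ∑ u : G, ∑ f : Fin r → G,
              if IsConj (w 0) u ∧ (∀ t, IsConj (w t.succ) (f t)) ∧ (List.ofFn f).prod = u⁻¹ * c
              then 1 else 0 := by
            refine Finset.sum_congr rfl fun u _ => ?_
            by_cases h : IsConj (w 0) u
            · rw [if_pos h, hrw u]
              refine Finset.sum_congr rfl fun f _ => ?_
              exact if_congr ⟨fun hh => ⟨h, hh⟩, fun hh => hh.2⟩ rfl rfl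
            · rw [if_neg h]
              symm
              refine Finset.sum_eq_zero fun f _ => ?_
              exact if_neg (fun hc => h hc.1)
        _ = ∑ p : G × (Fin r → G),
              if IsConj (w 0) p.1 ∧ (∀ t, IsConj (w t.succ) (p.2 t)) ∧ (List.ofFn p.2).prod = p.1⁻¹ * c
              then 1 else 0 := by
            rw [Fintype.sum_prod_type]
        _ = ∑ f : Fin (r+1) → G,
              if (∀ t, IsConj (w t) (f t)) ∧ (List.ofFn f).prod = c then 1 else 0 := by
            refine Fintype.sum_equiv (Fin.consEquiv (fun _ => G)) _ _ ?_
            rintro ⟨u, f⟩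
            show (if IsConj (w 0) u ∧ (∀ t, IsConj (w t.succ) (f t)) ∧ (List.ofFn f).prod = u⁻¹ * c
              then (1:ℂ) else 0)
              = if (∀ t, IsConj (w t) ((Fin.cons u f : ∀ _ : Fin (r+1), G) t)) ∧
                  (List.ofFn (Fin.cons u f : ∀ _ : Fin (r+1), G)).prod = c
              then 1 else 0
            refine if_congr ?_ rfl rfl
            rw [List.ofFn_succ]
            simp only [Fin.cons_zero, Fin.cons_succ, List.prod_cons]
            rw [Fin.forall_fin_succ]
            simp only [Fin.cons_zero, Fin.cons_succ]
            constructor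
            · rintro ⟨h1, h2, h3⟩
              exact ⟨⟨h1, h2⟩, by rw [h3]; group⟩
            · rintro ⟨⟨h1, h2⟩, h3⟩
              exact ⟨h1, h2, by rw [← h3]; group⟩

lemma isConj_inv' {a b : G} (h : IsConj a b) : IsConj a⁻¹ b⁻¹ := by
  obtain ⟨c, hc⟩ := isConj_iff.mp h
  exact isConj_iff.mpr ⟨c, by rw [← hc]; group⟩

lemma isConj_inv_swap {a b : G} : IsConj a⁻¹ b ↔ IsConj a b⁻¹ := by
  constructor
  · intro h
    have := isConj_inv' h
    rwa [inv_inv] at this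
  · intro h
    have := isConj_inv' h
    rwa [inv_inv] at this

lemma conj_inner_sum {n : ℕ} (x : Fin n → G) (P : MonoidAlgebra ℂ G) (hP : Central P)
    (k : Fin n) (rr : G) (hk : IsConj (x k) rr) :
    ∑ s : G, P (s⁻¹ * rr⁻¹ * s * rr)
      = (Fintype.card {z : G // z * rr⁻¹ = rr⁻¹ * z} : ℂ) *
          (classSum G (x k) * P) (x k) := by
  have step1 : ∑ s : G, P (s⁻¹ * rr⁻¹ * s * rr) = ∑ s : G, P (s * rr⁻¹ * s⁻¹ * rr) := by
    refine Fintype.sum_equiv (Equiv.inv G) _ _ fun s => ?_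
    show P (s⁻¹ * rr⁻¹ * s * rr) = P (s⁻¹ * rr⁻¹ * (s⁻¹)⁻¹ * rr)
    rw [inv_inv]
  rw [step1, sum_conjugates rr⁻¹ (fun v => P (v * rr))]
  congr 1
  have step2 : ∑ u : G, (if IsConj rr⁻¹ u then P (u * rr) else 0)
      = ∑ u : G, (if IsConj (x k) u then P (u⁻¹ * rr) else 0) := by
    refine Fintype.sum_equiv (Equiv.inv G) _ _ fun u => ?_
    show (if IsConj rr⁻¹ u then P (u * rr) else 0)
      = if IsConj (x k) u⁻¹ then P (u⁻¹⁻¹ * rr) else 0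
    rw [inv_inv]
    refine if_congr ?_ rfl rfl
    rw [isConj_inv_swap]
    exact ⟨fun h => hk.trans h, fun h => hk.symm.trans h⟩
  rw [step2, ← coeff_classSum_mul]
  exact (((central_classSum (x k)).mul hP).apply_isConj hk).symm


lemma class_partition {n : ℕ} (x : Fin n → G)
    (hdist : ∀ i j, i ≠ j → ¬ IsConj (x i) (x j))
    (hexh : ∀ g : G, ∃ i, IsConj (x i) g) (H : G → ℂ) :
    ∑ rr : G, H rr = ∑ k : Fin n, ∑ rr : G, if IsConj (x k) rr then H rr else 0 := by
  rw [Finset.sum_comm]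
  refine Finset.sum_congr rfl fun rr _ => ?_
  obtain ⟨k0, hk0⟩ := hexh rr
  rw [Finset.sum_eq_single k0]
  · rw [if_pos hk0]
  · intro k _ hk
    rw [if_neg]
    intro hc
    exact hdist k k0 hk (hc.trans hk0.symm)
  · intro h
    exact absurd (Finset.mem_univ k0) h

lemma count_main {n : ℕ} (x : Fin n → G)
    (hdist : ∀ i j, i ≠ j → ¬ IsConj (x i) (x j))
    (hexh : ∀ g : G, ∃ i, IsConj (x i) g)
    (P : MonoidAlgebra ℂ G) (hP : Central P) :
    ∑ rr : G, ∑ s : G, P (s⁻¹ * rr⁻¹ * s * rr)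
      = (Fintype.card G : ℂ) * ∑ k : Fin n, (classSum G (x k) * P) (x k) := by
  rw [class_partition x hdist hexh, Finset.mul_sum]
  refine Finset.sum_congr rfl fun k _ => ?_
  have hℓpos : 0 < Fintype.card {u : G // IsConj (x k) u} :=
    @Fintype.card_pos _ _ ⟨⟨x k, IsConj.refl _⟩⟩
  have hℓ : ((Fintype.card {u : G // IsConj (x k) u} : ℂ)) ≠ 0 :=
    Nat.cast_ne_zero.mpr hℓpos.ne' 
  -- value of the inner sum on the class of `x k`
  have hval : ∀ rr : G, IsConj (x k) rr →
      ∑ s : G, P (s⁻¹ * rr⁻¹ * s * rr)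
        = ((Fintype.card G : ℂ) / (Fintype.card {u : G // IsConj (x k) u} : ℂ)) *
            (classSum G (x k) * P) (x k) := by
    intro rr hk
    rw [conj_inner_sum x P hP k rr hk]
    congr 1
    have hcard : Fintype.card G =
        Fintype.card {z : G // z * rr⁻¹ = rr⁻¹ * z} *
          Fintype.card {u : G // IsConj rr⁻¹ u} := card_centralizer_mul_card_class rr⁻¹
    have hclass : Fintype.card {u : G // IsConj rr⁻¹ u}
        = Fintype.card {u : G // IsConj (x k) u} := by
      refine Fintype.card_congr (Equiv.subtypeEquiv (Equiv.inv G) fun u => ?_)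
      show IsConj rr⁻¹ u ↔ IsConj (x k) u⁻¹
      rw [isConj_inv_swap]
      exact ⟨fun h => hk.trans h, fun h => hk.symm.trans h⟩
    rw [hclass] at hcard
    rw [eq_div_iff hℓ]
    exact_mod_cast hcard.symm
  calc ∑ rr : G, (if IsConj (x k) rr then ∑ s : G, P (s⁻¹ * rr⁻¹ * s * rr) else 0)
      = ∑ rr : G, (if IsConj (x k) rr then
          ((Fintype.card G : ℂ) / (Fintype.card {u : G // IsConj (x k) u} : ℂ)) *
            (classSum G (x k) * P) (x k) else 0) := by
        refine Finset.sum_congr rfl fun rr _ => ?_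
        by_cases h : IsConj (x k) rr
        · rw [if_pos h, if_pos h, hval rr h]
        · rw [if_neg h, if_neg h]
    _ = (Fintype.card {u : G // IsConj (x k) u} : ℂ) *
          (((Fintype.card G : ℂ) / (Fintype.card {u : G // IsConj (x k) u} : ℂ)) *
            (classSum G (x k) * P) (x k)) := by
        rw [← Finset.sum_filter, Finset.sum_const, nsmul_eq_mul, Fintype.card_subtype]
    _ = (Fintype.card G : ℂ) * (classSum G (x k) * P) (x k) := by
        set L : ℂ := (Fintype.card {u : G // IsConj (x k) u} : ℂ) with hLdef
        have hL0 : L ≠ 0 := hℓ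
        field_simp

lemma coeff_extract {n : ℕ} (x : Fin n → G)
    (hdist : ∀ i j, i ≠ j → ¬ IsConj (x i) (x j))
    (c : Fin n → ℂ) (m : Fin n) :
    (∑ l : Fin n, c l • classSum G (x l)) (x m) = c m := by
  rw [MonoidAlgebra.coeff_sum, Finsupp.finset_sum_apply]
  rw [Finset.sum_eq_single m]
  · rw [MonoidAlgebra.coeff_smul_apply, classSum_apply, if_pos (IsConj.refl _), smul_eq_mul, mul_one]
  · intro l _ hl
    rw [MonoidAlgebra.coeff_smul_apply, classSum_apply, if_neg (hdist l m hl), smul_eq_mul, mul_zero]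
  · intro h
    exact absurd (Finset.mem_univ m) h

lemma classSum_mul_prod {n : ℕ} (x : Fin n → G)
    (a : Fin n → Fin n → Fin n → ℂ)
    (ha : ∀ i j, classSum G (x i) * classSum G (x j) =
      ∑ l : Fin n, a l i j • classSum G (x l))
    (A : Fin n → Matrix (Fin n) (Fin n) ℂ)
    (hA : ∀ j, A j = Matrix.of fun k l => a k l j) :
    ∀ (L : List (Fin n)) (k : Fin n),
      classSum G (x k) * (L.map fun j => classSum G (x j)).prod
        = ∑ m : Fin n, ((L.map A).reverse.prod) m k • classSum G (x m) := by
  intro L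
  induction L with
  | nil =>
      intro k
      simp only [List.map_nil, List.prod_nil, List.reverse_nil, mul_one]
      rw [Finset.sum_eq_single k]
      · rw [Matrix.one_apply_eq, one_smul]
      · intro m _ hm
        rw [Matrix.one_apply_ne hm, zero_smul]
      · intro h
        exact absurd (Finset.mem_univ k) h
  | cons j L ih =>
      intro k
      simp only [List.map_cons, List.prod_cons, List.reverse_cons, List.prod_append,
        List.prod_cons, List.prod_nil, mul_one]
      rw [← mul_assoc, ha k j, Finset.sum_mul]
      have : ∀ p : Fin n, (a p k j • classSum G (x p)) * (L.map fun j => classSum G (x j)).prod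
          = a p k j • ∑ m : Fin n, ((L.map A).reverse.prod) m p • classSum G (x m) := by
        intro p
        rw [smul_mul_assoc, ih p]
      rw [Finset.sum_congr rfl fun p _ => this p]
      have h2 : ∀ p : Fin n,
          a p k j • ∑ m : Fin n, ((L.map A).reverse.prod) m p • classSum G (x m)
            = ∑ m : Fin n, (((L.map A).reverse.prod) m p * a p k j) • classSum G (x m) := by
        intro p
        rw [Finset.smul_sum]
        refine Finset.sum_congr rfl fun m _ => ?_
        rw [smul_smul]
        congr 1
        ring
      rw [Finset.sum_congr rfl fun p _ => h2 p, Finset.sum_comm]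
      refine Finset.sum_congr rfl fun m _ => ?_
      rw [Matrix.mul_apply, Finset.sum_smul]
      refine Finset.sum_congr rfl fun p _ => ?_
      congr 1
      rw [hA j]
      rfl
variable {G : Type} [Group G] [Fintype G]

open CategoryTheory in
lemma sum_char_mul_char_inv (V W : FDRep ℂ G) [Simple V] [Simple W] :
    ∑ g : G, V.character g * W.character g⁻¹ =
      if Nonempty (V ≅ W) then (Fintype.card G : ℂ) else 0 := by
  haveI inv1 : Invertible ((Nat.card G : ℂ)) :=
    invertibleOfNonzero (Nat.cast_ne_zero.mpr Nat.card_pos.ne')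
  have h := FDRep.char_orthonormal V W
  have h2 : (∑ g : G, V.character g * W.character g⁻¹)
      = (Nat.card G : ℂ) * (if Nonempty (V ≅ W) then 1 else 0) := by
    rw [← h, ← mul_assoc, mul_inv_cancel₀ (Nat.cast_ne_zero.mpr Nat.card_pos.ne'), one_mul]
  have h3 : (∑ g : G, V.character g * W.character g⁻¹)
      = (Fintype.card G : ℂ) * (if Nonempty (V ≅ W) then 1 else 0) := by
    rw [h2, Nat.card_eq_fintype_card]
  rw [h3]
  split_ifs <;> simp

lemma char_isConj (V : FDRep ℂ G) {y g : G} (h : IsConj y g) : V.character g = V.character y := by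
  obtain ⟨c, hc⟩ := isConj_iff.mp h
  rw [← hc]
  exact FDRep.char_conj V y c

lemma trace_asAlgebraHom_classSum (V : FDRep ℂ G) (y : G) :
    LinearMap.trace ℂ V (Representation.asAlgebraHom V.ρ (classSum G y))
      = (Fintype.card {u : G // IsConj y u} : ℂ) * V.character y := by
  rw [classSum, map_sum, map_sum]
  have hterm : ∀ g : G,
      LinearMap.trace ℂ V (Representation.asAlgebraHom V.ρ
        (if IsConj y g then MonoidAlgebra.single g (1:ℂ) else 0))
      = if IsConj y g then V.character y else 0 := by
    intro g
    split_ifs with h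
    · rw [Representation.asAlgebraHom_single_one]
      exact char_isConj V h
    · rw [map_zero, map_zero]
  rw [Finset.sum_congr rfl fun g _ => hterm g, ← Finset.sum_filter, Finset.sum_const,
    nsmul_eq_mul, Fintype.card_subtype]

open CategoryTheory in
lemma hom_simple_smul (V : FDRep ℂ G) [Simple V] (f : V ⟶ V) : ∃ c : ℂ, f = c • 𝟙 V := by
  have h1 : Module.finrank ℂ (V ⟶ V) = 1 := by
    rw [FDRep.finrank_hom_simple_simple V V, if_pos ⟨Iso.refl V⟩]
  have h2 : (𝟙 V : V ⟶ V) ≠ 0 := CategoryTheory.id_nonzero V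
  have h3 := (finrank_eq_one_iff_of_nonzero (𝟙 V : V ⟶ V) h2).mp h1
  have hf : f ∈ Submodule.span ℂ {(𝟙 V : V ⟶ V)} := by rw [h3]; trivial
  obtain ⟨c, hc⟩ := Submodule.mem_span_singleton.mp hf
  exact ⟨c, hc.symm⟩

open CategoryTheory in
lemma char_one_ne_zero (V : FDRep ℂ G) [Simple V] : V.character 1 ≠ 0 := by
  rw [FDRep.char_one]
  intro h
  have hfr : Module.finrank ℂ V = 0 := by exact_mod_cast h
  have hsub : Subsingleton (V : Type) := by
    rw [Module.finrank_zero_iff] at hfr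
    exact hfr
  apply CategoryTheory.id_nonzero V
  apply Action.Hom.ext
  ext v
  exact @Subsingleton.elim _ hsub _ _

open CategoryTheory in
lemma asAlgebraHom_classSum_eq_smul (V : FDRep ℂ G) [Simple V] (y : G) :
    Representation.asAlgebraHom V.ρ (classSum G y)
      = (((Fintype.card {u : G // IsConj y u} : ℂ) * V.character y) / V.character 1)
          • (1 : Module.End ℂ V) := by
  have hcent := central_classSum (G := G) y
  have hcomm : ∀ g : G,
      (Representation.asAlgebraHom V.ρ (classSum G y)) ∘ₗ (V.ρ g)
        = (V.ρ g) ∘ₗ (Representation.asAlgebraHom V.ρ (classSum G y)) := by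
    intro g
    rw [← Representation.asAlgebraHom_single_one, ← Module.End.mul_eq_comp,
      ← Module.End.mul_eq_comp, ← map_mul, ← map_mul, ← hcent g]
  let f : V ⟶ V := Action.Hom.mk (ConcreteCategory.ofHom (Representation.asAlgebraHom V.ρ (classSum G y)))
    (fun g => by ext v; exact LinearMap.congr_fun (hcomm g) v)
  obtain ⟨c, hc⟩ := hom_simple_smul V f
  have hf0 : Representation.asAlgebraHom V.ρ (classSum G y) = c • (1 : Module.End ℂ V) := by
    have : f.hom.hom.hom = (c • 𝟙 V : V ⟶ V).hom.hom.hom := by rw [hc]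
    exact this
  have htr := trace_asAlgebraHom_classSum V y
  rw [hf0, map_smul, smul_eq_mul] at htr
  have htr1 : LinearMap.trace ℂ V (1 : Module.End ℂ V) = V.character 1 := by
    rw [FDRep.char_one]
    exact LinearMap.trace_one ℂ V
  rw [htr1] at htr
  rw [hf0]
  congr 1
  rw [eq_div_iff (char_one_ne_zero V), ← htr, mul_comm]

noncomputable def omegaC {n : ℕ} (x : Fin n → G) (V : Fin n → FDRep ℂ G) (l k : Fin n) : ℂ :=
  ((Fintype.card {u : G // IsConj (x k) u} : ℂ) * (V l).character (x k)) / (V l).character 1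

open CategoryTheory in
lemma omegaC_spec {n : ℕ} (x : Fin n → G) (V : Fin n → FDRep ℂ G)
    (hsimple : ∀ l, Simple (V l)) (l k : Fin n) :
    Representation.asAlgebraHom (V l).ρ (classSum G (x k))
      = omegaC x V l k • (1 : Module.End ℂ (V l)) := by
  haveI := hsimple l
  exact asAlgebraHom_classSum_eq_smul (V l) (x k)

open CategoryTheory in
lemma trace_one_ne_zero {n : ℕ} (V : Fin n → FDRep ℂ G) (hsimple : ∀ l, Simple (V l))
    (l : Fin n) : LinearMap.trace ℂ (V l) (1 : Module.End ℂ (V l)) ≠ 0 := by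
  haveI := hsimple l
  rw [LinearMap.trace_one]
  have := char_one_ne_zero (V l)
  rwa [FDRep.char_one] at this

open CategoryTheory in
lemma omegaC_mul {n : ℕ} (x : Fin n → G) (V : Fin n → FDRep ℂ G)
    (hsimple : ∀ l, Simple (V l))
    (a : Fin n → Fin n → Fin n → ℂ)
    (ha : ∀ i j, classSum G (x i) * classSum G (x j) =
      ∑ l : Fin n, a l i j • classSum G (x l))
    (l i j : Fin n) :
    omegaC x V l i * omegaC x V l j = ∑ m : Fin n, a m i j * omegaC x V l m := by
  haveI := hsimple l
  have h1 := congrArg (Representation.asAlgebraHom (V l).ρ) (ha i j)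
  rw [map_mul, omegaC_spec x V hsimple l i, omegaC_spec x V hsimple l j, map_sum] at h1
  have h2 : ∀ m : Fin n,
      Representation.asAlgebraHom (V l).ρ (a m i j • classSum G (x m))
        = (a m i j * omegaC x V l m) • (1 : Module.End ℂ (V l)) := by
    intro m
    rw [map_smul, omegaC_spec x V hsimple l m, smul_smul]
  rw [Finset.sum_congr rfl fun m _ => h2 m, ← Finset.sum_smul, smul_mul_smul, one_mul] at h1
  have h3 := congrArg (LinearMap.trace ℂ (V l)) h1
  rw [map_smul, map_smul, smul_eq_mul, smul_eq_mul] at h3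
  exact mul_right_cancel₀ (trace_one_ne_zero V hsimple l) h3

noncomputable def Wmat {n : ℕ} (x : Fin n → G) (V : Fin n → FDRep ℂ G) :
    Matrix (Fin n) (Fin n) ℂ := Matrix.of fun l k => omegaC x V l k

open CategoryTheory in
lemma Wmat_rows_indep {n : ℕ} (x : Fin n → G) (V : Fin n → FDRep ℂ G)
    (hexh : ∀ g : G, ∃ i, IsConj (x i) g)
    (hsimple : ∀ l, Simple (V l))
    (hnoniso : ∀ l m, l ≠ m → ¬ Nonempty (V l ≅ V m))
    (u : Fin n → ℂ) (hu : ∀ k, ∑ l : Fin n, u l * omegaC x V l k = 0) : u = 0 := by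
  have hchar1 : ∀ l : Fin n, (V l).character 1 ≠ 0 := by
    intro l; haveI := hsimple l; exact char_one_ne_zero (V l)
  have hg : ∀ g : G, ∑ l : Fin n, (u l / (V l).character 1) * (V l).character g = 0 := by
    intro g
    obtain ⟨k, hk⟩ := hexh g
    have hcard : ((Fintype.card {y : G // IsConj (x k) y} : ℂ)) ≠ 0 :=
      Nat.cast_ne_zero.mpr (@Fintype.card_pos _ _ ⟨⟨x k, IsConj.refl _⟩⟩).ne'
    have h1 := hu k
    have h2 : ∑ l : Fin n, u l * omegaC x V l k
        = (Fintype.card {y : G // IsConj (x k) y} : ℂ) *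
            ∑ l : Fin n, (u l / (V l).character 1) * (V l).character (x k) := by
      rw [Finset.mul_sum]
      refine Finset.sum_congr rfl fun l _ => ?_
      rw [omegaC]
      field_simp
    rw [h2] at h1
    have h3 := (mul_eq_zero.mp h1).resolve_left hcard
    calc ∑ l : Fin n, (u l / (V l).character 1) * (V l).character g
        = ∑ l : Fin n, (u l / (V l).character 1) * (V l).character (x k) := by
          refine Finset.sum_congr rfl fun l _ => ?_
          rw [char_isConj (V l) hk]
      _ = 0 := h3
  funext m
  show u m = 0
  haveI := hsimple m
  have key : ∑ g : G, (∑ l : Fin n, (u l / (V l).character 1) * (V l).character g)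
      * (V m).character g⁻¹ = 0 := by
    refine Finset.sum_eq_zero fun g _ => ?_
    rw [hg g, zero_mul]
  have expand : ∑ g : G, (∑ l : Fin n, (u l / (V l).character 1) * (V l).character g)
      * (V m).character g⁻¹
      = ∑ l : Fin n, (u l / (V l).character 1) *
          ∑ g : G, (V l).character g * (V m).character g⁻¹ := by
    rw [Finset.sum_congr rfl fun g (_ : g ∈ Finset.univ) => Finset.sum_mul Finset.univ
      (fun l : Fin n => (u l / (V l).character 1) * (V l).character g) ((V m).character g⁻¹)]
    rw [Finset.sum_comm]
    refine Finset.sum_congr rfl fun l _ => ?_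
    rw [Finset.mul_sum]
    refine Finset.sum_congr rfl fun g _ => ?_
    ring
  have ortho : ∀ l : Fin n, ∑ g : G, (V l).character g * (V m).character g⁻¹
      = if l = m then (Fintype.card G : ℂ) else 0 := by
    intro l
    haveI := hsimple l
    rw [sum_char_mul_char_inv (V l) (V m)]
    by_cases h : l = m
    · subst h
      rw [if_pos ⟨Iso.refl _⟩, if_pos rfl]
    · rw [if_neg (hnoniso l m h), if_neg h]
  have final : ∑ l : Fin n, (u l / (V l).character 1) *
      (if l = m then (Fintype.card G : ℂ) else 0)
      = (u m / (V m).character 1) * (Fintype.card G : ℂ) := by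
    rw [Finset.sum_eq_single m]
    · rw [if_pos rfl]
    · intro l _ hl
      rw [if_neg hl, mul_zero]
    · intro h
      exact absurd (Finset.mem_univ m) h
  have h0 : (u m / (V m).character 1) * (Fintype.card G : ℂ) = 0 := by
    rw [← final]
    rw [show (∑ l : Fin n, (u l / (V l).character 1) *
          (if l = m then (Fintype.card G : ℂ) else 0))
        = ∑ l : Fin n, (u l / (V l).character 1) *
            ∑ g : G, (V l).character g * (V m).character g⁻¹ from
      Finset.sum_congr rfl fun l _ => by rw [ortho l]]
    rw [← expand]
    exact key
  have hGne : (Fintype.card G : ℂ) ≠ 0 := Nat.cast_ne_zero.mpr Fintype.card_ne_zero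
  have hum := (mul_eq_zero.mp h0).resolve_right hGne
  exact (div_eq_zero_iff.mp hum).resolve_right (hchar1 m)

open CategoryTheory in
lemma Wmat_isUnit {n : ℕ} (x : Fin n → G) (V : Fin n → FDRep ℂ G)
    (hexh : ∀ g : G, ∃ i, IsConj (x i) g)
    (hsimple : ∀ l, Simple (V l))
    (hnoniso : ∀ l m, l ≠ m → ¬ Nonempty (V l ≅ V m)) :
    IsUnit (Wmat x V) := by
  rw [← Matrix.vecMul_injective_iff_isUnit]
  intro v w h
  have h' : Matrix.vecMul v (Wmat x V) = Matrix.vecMul w (Wmat x V) := h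
  have hz : Matrix.vecMul (v - w) (Wmat x V) = 0 := by
    rw [Matrix.sub_vecMul, h', sub_self]
  have h0 : v - w = 0 := by
    refine Wmat_rows_indep x V hexh hsimple hnoniso (v - w) fun k => ?_
    have := congrFun hz k
    simpa [Matrix.vecMul, dotProduct, Wmat] using this
  exact sub_eq_zero.mp h0

open CategoryTheory in
lemma Wmat_mul_A {n : ℕ} (x : Fin n → G) (V : Fin n → FDRep ℂ G)
    (hsimple : ∀ l, Simple (V l))
    (a : Fin n → Fin n → Fin n → ℂ)
    (ha : ∀ i j, classSum G (x i) * classSum G (x j) =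
      ∑ l : Fin n, a l i j • classSum G (x l))
    (A : Fin n → Matrix (Fin n) (Fin n) ℂ)
    (hA : ∀ j, A j = Matrix.of fun k l => a k l j) (j : Fin n) :
    Wmat x V * A j = Matrix.diagonal (fun l => omegaC x V l j) * Wmat x V := by
  ext l k
  rw [Matrix.mul_apply, Matrix.diagonal_mul]
  show ∑ m : Fin n, Wmat x V l m * (A j) m k = omegaC x V l j * Wmat x V l k
  have : ∀ m : Fin n, Wmat x V l m * (A j) m k = a m k j * omegaC x V l m := by
    intro m
    rw [hA j]
    show omegaC x V l m * a m k j = a m k j * omegaC x V l m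
    ring
  rw [Finset.sum_congr rfl fun m _ => this m, ← omegaC_mul x V hsimple a ha l k j]
  show omegaC x V l k * omegaC x V l j = omegaC x V l j * omegaC x V l k
  ring

open CategoryTheory in
lemma Wmat_mul_prodA {n : ℕ} (x : Fin n → G) (V : Fin n → FDRep ℂ G)
    (hsimple : ∀ l, Simple (V l))
    (a : Fin n → Fin n → Fin n → ℂ)
    (ha : ∀ i j, classSum G (x i) * classSum G (x j) =
      ∑ l : Fin n, a l i j • classSum G (x l))
    (A : Fin n → Matrix (Fin n) (Fin n) ℂ)
    (hA : ∀ j, A j = Matrix.of fun k l => a k l j) :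
    ∀ L : List (Fin n),
      Wmat x V * (L.map A).prod
        = Matrix.diagonal (fun l => ((L.map (fun j => omegaC x V l j)).prod)) * Wmat x V := by
  intro L
  induction L with
  | nil =>
      simp only [List.map_nil, List.prod_nil, mul_one]
      rw [Matrix.diagonal_one, one_mul]
  | cons j L ih =>
      simp only [List.map_cons, List.prod_cons]
      rw [← mul_assoc, Wmat_mul_A x V hsimple a ha A hA j, mul_assoc, ih, ← mul_assoc,
        Matrix.diagonal_mul_diagonal]

lemma trace_conj_eq {n : ℕ} (W M D : Matrix (Fin n) (Fin n) ℂ)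
    (hW : IsUnit W) (h : W * M = D * W) : M.trace = D.trace := by
  have hdet : IsUnit W.det := (Matrix.isUnit_iff_isUnit_det W).mp hW
  have hM : M = W⁻¹ * (D * W) := by
    rw [← h, ← mul_assoc, Matrix.nonsing_inv_mul W hdet, one_mul]
  rw [hM, Matrix.trace_mul_comm, mul_assoc, Matrix.mul_nonsing_inv W hdet, mul_one]

set_option maxHeartbeats 1000000 in
/-- the number `p_{i₁,…,i_r}` of tuples `(r,s,g_{i₁},…,g_{i_r})` with
`s⁻¹r⁻¹sr = g_{i₁}⋯g_{i_r}` (each `g_{i_t}` in the class `C_{i_t}`) equals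
`|G| · ∑_l ∏_t (ℓ_{i_t} χ_l(g_{i_t})/χ_l(1))`, which is `|G| · Tr(A_{i₁}⋯A_{i_r})` for the
structure-constant matrices `A_j` of the class sums. -/
theorem generalized_commutator_count (G : Type) [Group G] [Fintype G]
    {n : ℕ} (x : Fin n → G)
    (hdist : ∀ i j, i ≠ j → ¬ IsConj (x i) (x j))
    (hexh : ∀ g : G, ∃ i, IsConj (x i) g)
    (V : Fin n → FDRep ℂ G)
    (hsimple : ∀ l, CategoryTheory.Simple (V l))
    (hnoniso : ∀ l m, l ≠ m → ¬ Nonempty (V l ≅ V m))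
    (hcomplete : ∀ W : FDRep ℂ G, CategoryTheory.Simple W → ∃ l, Nonempty (W ≅ V l))
    (a : Fin n → Fin n → Fin n → ℂ)
    (ha : ∀ i j, classSum G (x i) * classSum G (x j) =
      ∑ l : Fin n, a l i j • classSum G (x l))
    (A : Fin n → Matrix (Fin n) (Fin n) ℂ)
    (hA : ∀ j, A j = Matrix.of fun k l => a k l j)
    {r : ℕ} (i : Fin r → Fin n) :
    ((Nat.card {t : G × G × (Fin r → G) //
        (∀ j, IsConj (x (i j)) (t.2.2 j)) ∧
          t.2.1⁻¹ * t.1⁻¹ * t.2.1 * t.1 = (List.ofFn t.2.2).prod} : ℂ) =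
      (Fintype.card G : ℂ) *
        ∑ l : Fin n, ∏ t : Fin r,
          ((Nat.card {y : G // IsConj (x (i t)) y} : ℂ) *
            (V l).character (x (i t)) / (V l).character 1)) ∧
    ((Nat.card {t : G × G × (Fin r → G) //
        (∀ j, IsConj (x (i j)) (t.2.2 j)) ∧
          t.2.1⁻¹ * t.1⁻¹ * t.2.1 * t.1 = (List.ofFn t.2.2).prod} : ℂ) =
      (Fintype.card G : ℂ) * Matrix.trace (List.ofFn (fun t => A (i t))).prod) := by
  -- notation
  have hPmap : ((List.ofFn (fun t => classSum G (x (i t)))).prod : MonoidAlgebra ℂ G)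
      = (((List.ofFn i).map (fun j => classSum G (x j))).prod : MonoidAlgebra ℂ G) := by
    rw [List.map_ofFn]
    rfl
  have hAmap : ((List.ofFn (fun t => A (i t))).prod : Matrix (Fin n) (Fin n) ℂ)
      = (((List.ofFn i).map A).prod : Matrix (Fin n) (Fin n) ℂ) := by
    rw [List.map_ofFn]
    rfl
  have hPc : Central ((List.ofFn (fun t => classSum G (x (i t)))).prod : MonoidAlgebra ℂ G) := by
    rw [hPmap]
    refine central_list_prod _ fun z hz => ?_
    obtain ⟨j, -, rfl⟩ := List.mem_map.mp hz
    exact central_classSum _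
  -- step 1 : the count as a double sum of coefficients
  have hc1 : ((Nat.card {t : G × G × (Fin r → G) //
        (∀ j, IsConj (x (i j)) (t.2.2 j)) ∧
          t.2.1⁻¹ * t.1⁻¹ * t.2.1 * t.1 = (List.ofFn t.2.2).prod} : ℂ))
      = ∑ t : G × G × (Fin r → G), if (∀ j, IsConj (x (i j)) (t.2.2 j)) ∧
          t.2.1⁻¹ * t.1⁻¹ * t.2.1 * t.1 = (List.ofFn t.2.2).prod then (1:ℂ) else 0 := by
    rw [Nat.card_eq_fintype_card, Fintype.card_subtype, Finset.card_filter]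
    push_cast
    rfl
  have hc2 : (∑ t : G × G × (Fin r → G), if (∀ j, IsConj (x (i j)) (t.2.2 j)) ∧
          t.2.1⁻¹ * t.1⁻¹ * t.2.1 * t.1 = (List.ofFn t.2.2).prod then (1:ℂ) else 0)
      = ∑ rr : G, ∑ s : G,
          ((List.ofFn (fun t => classSum G (x (i t)))).prod : MonoidAlgebra ℂ G)
            (s⁻¹ * rr⁻¹ * s * rr) := by
    rw [Fintype.sum_prod_type]
    refine Finset.sum_congr rfl fun rr _ => ?_
    rw [Fintype.sum_prod_type]
    refine Finset.sum_congr rfl fun s _ => ?_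
    rw [coeff_prod_eq r (fun t => x (i t)) (s⁻¹ * rr⁻¹ * s * rr)]
    refine Finset.sum_congr rfl fun f _ => ?_
    refine if_congr ?_ rfl rfl
    exact and_congr Iff.rfl eq_comm
  -- step 2 : group the double sum over classes
  have hc3 : (∑ rr : G, ∑ s : G,
          ((List.ofFn (fun t => classSum G (x (i t)))).prod : MonoidAlgebra ℂ G)
            (s⁻¹ * rr⁻¹ * s * rr))
      = (Fintype.card G : ℂ) * ∑ k : Fin n,
          (classSum G (x k) * (List.ofFn (fun t => classSum G (x (i t)))).prod) (x k) :=
    count_main x hdist hexh _ hPc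
  -- step 3 : coefficients from the structure-constant matrices
  have hc4 : ∀ k : Fin n,
      (classSum G (x k) * (List.ofFn (fun t => classSum G (x (i t)))).prod) (x k)
        = (((List.ofFn i).map A).reverse.prod) k k := by
    intro k
    rw [hPmap, classSum_mul_prod x a ha A hA (List.ofFn i) k]
    exact coeff_extract x hdist _ k
  -- traces
  have hWu := Wmat_isUnit x V hexh hsimple hnoniso
  have hdiagrev := Wmat_mul_prodA x V hsimple a ha A hA (List.ofFn i).reverse
  have hdiag := Wmat_mul_prodA x V hsimple a ha A hA (List.ofFn i)
  rw [List.map_reverse] at hdiagrev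
  have hDrev : (Matrix.diagonal fun l =>
        (((List.ofFn i).reverse.map (fun j => omegaC x V l j)).prod))
      = (Matrix.diagonal fun l => (((List.ofFn i).map (fun j => omegaC x V l j)).prod)) := by
    refine congrArg Matrix.diagonal (funext fun l => ?_)
    rw [List.map_reverse, List.prod_reverse]
  rw [hDrev] at hdiagrev
  have htrR := trace_conj_eq _ _ _ hWu hdiagrev
  have htrM := trace_conj_eq _ _ _ hWu hdiag
  -- trace of reversed product as the sum of diagonal coefficients
  have htrsum : Matrix.trace (((List.ofFn i).map A).reverse.prod)
      = ∑ k : Fin n, (((List.ofFn i).map A).reverse.prod) k k := rfl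
  -- the common value
  have hcommon : ((Nat.card {t : G × G × (Fin r → G) //
        (∀ j, IsConj (x (i j)) (t.2.2 j)) ∧
          t.2.1⁻¹ * t.1⁻¹ * t.2.1 * t.1 = (List.ofFn t.2.2).prod} : ℂ))
      = (Fintype.card G : ℂ) *
          Matrix.trace (Matrix.diagonal fun l =>
            (((List.ofFn i).map (fun j => omegaC x V l j)).prod)) := by
    rw [hc1, hc2, hc3, Finset.sum_congr rfl fun k _ => hc4 k, ← htrsum, htrR]
  constructor
  · rw [hcommon, Matrix.trace_diagonal]
    congr 1
    refine Finset.sum_congr rfl fun l _ => ?_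
    rw [List.map_ofFn, List.prod_ofFn]
    refine Finset.prod_congr rfl fun t _ => ?_
    show omegaC x V l (i t) = _
    rw [omegaC, Nat.card_eq_fintype_card]
  · rw [hcommon, hAmap, htrM]
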